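/- Let σ₁, …, σ_n be closed line segments in ℝ³, each contained in some line L(θᵢ) of the first ruling of the hyperboloid of one sheet S. Let A ⊆ AddCircle (2π) be the image under the quotient map ℝ → AddCircle (2π) of {φ ∈ ℝ : M(φ) meets every σᵢ} (this set is invariant under φ ↦ φ + 2π). Then A has at most n connected components: there exist points φ₁, …, φ_n ∈ A such that every point of A lies in the connected component within A of some φⱼ, or A is empty. -/

import Mathlib

open Set

noncomputable section

/-- The line in ℝ³ through `a` with direction `v`. -/
def lineThrough (a v : ℝ × ℝ × ℝ) : Set (ℝ × ℝ × ℝ) :=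
  {p | ∃ r : ℝ, p = a + r • v}

/-- `L` is a line in ℝ³. -/
def IsLine (L : Set (ℝ × ℝ × ℝ)) : Prop :=
  ∃ a v : ℝ × ℝ × ℝ, v ≠ 0 ∧ L = lineThrough a v

/-- `L` is a transversal to the family of sets `s`: it is a line meeting every `s i`. -/
def IsTransversal {n : ℕ} (s : Fin n → Set (ℝ × ℝ × ℝ)) (L : Set (ℝ × ℝ × ℝ)) : Prop :=
  IsLine L ∧ ∀ i, (L ∩ s i).Nonempty

/-- Two transversals `L₀`, `L₁` to the family `s` lie in the same connected component of
transversals: one can be moved continuously to the other while remaining a transversal. -/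
def SameComp {n : ℕ} (s : Fin n → Set (ℝ × ℝ × ℝ)) (L₀ L₁ : Set (ℝ × ℝ × ℝ)) : Prop :=
  ∃ a v : ℝ → ℝ × ℝ × ℝ,
    ContinuousOn a (Icc 0 1) ∧ ContinuousOn v (Icc 0 1) ∧
    (∀ t ∈ Icc (0:ℝ) 1, v t ≠ 0) ∧
    (∀ t ∈ Icc (0:ℝ) 1, ∀ i, (lineThrough (a t) (v t) ∩ s i).Nonempty) ∧
    lineThrough (a 0) (v 0) = L₀ ∧ lineThrough (a 1) (v 1) = L₁

/-- The line `L(θ)` of the first ruling of the hyperboloid `x² + y² − z² = 1`. -/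
def Lrul (θ : ℝ) : Set (ℝ × ℝ × ℝ) :=
  {p | ∃ t : ℝ, p = (Real.cos θ - t * Real.sin θ, Real.sin θ + t * Real.cos θ, t)}

/-- The line `M(θ)` of the second ruling of the hyperboloid `x² + y² − z² = 1`. -/
def Mrul (θ : ℝ) : Set (ℝ × ℝ × ℝ) :=
  {p | ∃ t : ℝ, p = (Real.cos θ - t * Real.sin θ, Real.sin θ + t * Real.cos θ, -t)}

namespace Stmt10

open Real

def Lpt (θ t : ℝ) : ℝ × ℝ × ℝ :=
  (Real.cos θ - t * Real.sin θ, Real.sin θ + t * Real.cos θ, t)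

lemma trig_fwd (χ ψ t : ℝ)
    (h1 : Real.cos (χ - ψ) - t * Real.sin (χ - ψ) = Real.cos (χ + ψ) + t * Real.sin (χ + ψ))
    (h2 : Real.sin (χ - ψ) + t * Real.cos (χ - ψ) = Real.sin (χ + ψ) - t * Real.cos (χ + ψ)) :
    Real.sin ψ = t * Real.cos ψ := by
  have pyth := Real.sin_sq_add_cos_sq χ
  simp only [Real.sin_add, Real.cos_add, Real.sin_sub, Real.cos_sub] at h1 h2
  linear_combination (Real.sin χ / 2) * h1 - (Real.cos χ / 2) * h2 -
    (Real.sin ψ - t * Real.cos ψ) * pyth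

lemma trig_bwd1 (χ ψ t : ℝ) (h : Real.sin ψ = t * Real.cos ψ) :
    Real.cos (χ - ψ) - t * Real.sin (χ - ψ) = Real.cos (χ + ψ) + t * Real.sin (χ + ψ) := by
  simp only [Real.sin_add, Real.cos_add, Real.sin_sub, Real.cos_sub]
  linear_combination 2 * Real.sin χ * h

lemma trig_bwd2 (χ ψ t : ℝ) (h : Real.sin ψ = t * Real.cos ψ) :
    Real.sin (χ - ψ) + t * Real.cos (χ - ψ) = Real.sin (χ + ψ) - t * Real.cos (χ + ψ) := by
  simp only [Real.sin_add, Real.cos_add, Real.sin_sub, Real.cos_sub]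
  linear_combination (-2 * Real.cos χ) * h

lemma point_mem_Mrul (θ φ t : ℝ) :
    Lpt θ t ∈ Mrul φ ↔ Real.sin ((φ - θ) / 2) = t * Real.cos ((φ - θ) / 2) := by
  have e1 : (φ + θ) / 2 - (φ - θ) / 2 = θ := by ring
  have e2 : (φ + θ) / 2 + (φ - θ) / 2 = φ := by ring
  constructor
  · rintro ⟨s, hs⟩
    simp only [Lpt, Prod.mk.injEq] at hs
    obtain ⟨h1, h2, h3⟩ := hs
    have hs' : s = -t := by linarith
    subst hs'
    refine trig_fwd ((φ + θ) / 2) ((φ - θ) / 2) t ?_ ?_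
    · rw [e1, e2]; linear_combination h1
    · rw [e1, e2]; linear_combination h2
  · intro h
    refine ⟨-t, ?_⟩
    simp only [Lpt, Prod.mk.injEq]
    have g1 := trig_bwd1 ((φ + θ) / 2) ((φ - θ) / 2) t h
    have g2 := trig_bwd2 ((φ + θ) / 2) ((φ - θ) / 2) t h
    rw [e1, e2] at g1 g2
    exact ⟨by linear_combination g1, by linear_combination g2, by ring⟩

lemma smul_comb (θ p q a b : ℝ) (hab : a + b = 1) :
    a • Lpt θ p + b • Lpt θ q = Lpt θ (a * p + b * q) := by
  simp only [Lpt, Prod.smul_mk, smul_eq_mul, Prod.mk_add_mk, Prod.mk.injEq]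
  exact ⟨by linear_combination Real.cos θ * hab, by linear_combination Real.sin θ * hab, trivial⟩

lemma seg_eq (θ p q : ℝ) : segment ℝ (Lpt θ p) (Lpt θ q) = Lpt θ '' segment ℝ p q := by
  ext z
  constructor
  · rintro ⟨a, b, ha, hb, hab, rfl⟩
    exact ⟨a * p + b * q, ⟨a, b, ha, hb, hab, rfl⟩, (smul_comb θ p q a b hab).symm⟩
  · rintro ⟨r, ⟨a, b, ha, hb, hab, rfl⟩, rfl⟩
    exact ⟨a, b, ha, hb, hab, by rw [smul_comb θ p q a b hab]; simp [smul_eq_mul]⟩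

lemma tan_interval (a b ψ : ℝ) :
    (∃ t ∈ Icc a b, Real.sin ψ = t * Real.cos ψ) ↔
      ∃ k : ℤ, ψ ∈ Icc (Real.arctan a + k * π) (Real.arctan b + k * π) := by
  constructor
  · rintro ⟨t, ⟨hta, htb⟩, ht⟩
    have hcos : Real.cos ψ ≠ 0 := by
      intro h0
      have h1 := Real.sin_sq_add_cos_sq ψ
      rw [h0, ht, h0] at h1
      norm_num at h1
    set k := toIocDiv Real.pi_pos (-(π / 2)) ψ with hkdef
    have hmem : ψ - k • π ∈ Set.Ioc (-(π / 2)) (-(π / 2) + π) :=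
      sub_toIocDiv_zsmul_mem_Ioc Real.pi_pos (-(π / 2)) ψ
    rw [zsmul_eq_mul] at hmem
    set ψ' := ψ - (k : ℝ) * π with hψ'def
    have hψeq : ψ = ψ' + (k : ℝ) * π := by ring
    have hsk : Real.sin ((k : ℝ) * π) = 0 := Real.sin_int_mul_pi k
    have hck : Real.cos ((k : ℝ) * π) ≠ 0 := by
      intro h0
      have h1 := Real.sin_sq_add_cos_sq ((k : ℝ) * π)
      rw [h0, hsk] at h1
      norm_num at h1
    have hsin : Real.sin ψ = Real.sin ψ' * Real.cos ((k : ℝ) * π) := by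
      rw [hψeq, Real.sin_add, hsk]; ring
    have hcosψ : Real.cos ψ = Real.cos ψ' * Real.cos ((k : ℝ) * π) := by
      rw [hψeq, Real.cos_add, hsk]; ring
    have hcos' : Real.cos ψ' ≠ 0 := fun h0 => hcos (by rw [hcosψ, h0, zero_mul])
    have hne : ψ' ≠ π / 2 := by
      intro h0
      exact hcos' (by rw [h0, Real.cos_pi_div_two])
    have hIoo : ψ' ∈ Ioo (-(π / 2)) (π / 2) := by
      refine ⟨hmem.1, lt_of_le_of_ne ?_ hne⟩
      have := hmem.2; linarith
    have hst : Real.sin ψ' = t * Real.cos ψ' := by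
      have : Real.sin ψ' * Real.cos ((k : ℝ) * π) = t * Real.cos ψ' * Real.cos ((k : ℝ) * π) := by
        rw [← hsin]; rw [ht, hcosψ]; ring
      have := mul_right_cancel₀ hck this
      linarith
    have htan : Real.tan ψ' = t := by
      rw [Real.tan_eq_sin_div_cos, hst]
      field_simp
    have harctan : Real.arctan t = ψ' := by
      rw [← htan, Real.arctan_tan hIoo.1 hIoo.2]
    have h1 : Real.arctan a ≤ ψ' := harctan ▸ Real.arctan_strictMono.monotone hta
    have h2 : ψ' ≤ Real.arctan b := harctan ▸ Real.arctan_strictMono.monotone htb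
    exact ⟨k, by constructor <;> [linarith; linarith]⟩
  · rintro ⟨k, h1, h2⟩
    set ψ' := ψ - (k : ℝ) * π with hψ'def
    have hψeq : ψ = ψ' + (k : ℝ) * π := by ring
    have ha' := Real.neg_pi_div_two_lt_arctan a
    have hb' := Real.arctan_lt_pi_div_two b
    have hm1 : Real.arctan a ≤ ψ' := by rw [hψ'def]; linarith
    have hm2 : ψ' ≤ Real.arctan b := by rw [hψ'def]; linarith
    have hIoo : ψ' ∈ Ioo (-(π / 2)) (π / 2) := ⟨lt_of_lt_of_le ha' hm1, lt_of_le_of_lt hm2 hb'⟩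
    have hIa : Real.arctan a ∈ Ioo (-(π / 2)) (π / 2) :=
      ⟨ha', Real.arctan_lt_pi_div_two a⟩
    have hIb : Real.arctan b ∈ Ioo (-(π / 2)) (π / 2) :=
      ⟨Real.neg_pi_div_two_lt_arctan b, hb'⟩
    have hta : a ≤ Real.tan ψ' := by
      have := Real.strictMonoOn_tan.monotoneOn hIa hIoo hm1
      rwa [Real.tan_arctan] at this
    have htb : Real.tan ψ' ≤ b := by
      have := Real.strictMonoOn_tan.monotoneOn hIoo hIb hm2
      rwa [Real.tan_arctan] at this
    have hcos' : 0 < Real.cos ψ' := Real.cos_pos_of_mem_Ioo hIoo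
    have hst : Real.sin ψ' = Real.tan ψ' * Real.cos ψ' := by
      rw [Real.tan_eq_sin_div_cos]; field_simp
    have hsk : Real.sin ((k : ℝ) * π) = 0 := Real.sin_int_mul_pi k
    refine ⟨Real.tan ψ', ⟨hta, htb⟩, ?_⟩
    rw [hψeq, Real.sin_add, Real.cos_add, hsk, hst]
    ring

lemma inter_seg (θ p q φ : ℝ) :
    (Mrul φ ∩ segment ℝ (Lpt θ p) (Lpt θ q)).Nonempty ↔
      ∃ k : ℤ, θ + 2 * Real.arctan (min p q) + k * (2 * π) ≤ φ ∧
        φ ≤ θ + 2 * Real.arctan (max p q) + k * (2 * π) := by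
  rw [seg_eq]
  have step1 : (Mrul φ ∩ Lpt θ '' segment ℝ p q).Nonempty ↔
      ∃ t ∈ segment ℝ p q, Lpt θ t ∈ Mrul φ := by
    constructor
    · rintro ⟨z, hz1, t, ht, rfl⟩; exact ⟨t, ht, hz1⟩
    · rintro ⟨t, ht, h⟩; exact ⟨Lpt θ t, h, t, ht, rfl⟩
  rw [step1]
  have step2 : segment ℝ p q = Icc (min p q) (max p q) := by
    rw [segment_eq_uIcc, uIcc]
  rw [step2]
  simp only [point_mem_Mrul]
  rw [tan_interval (min p q) (max p q) ((φ - θ) / 2)]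
  refine exists_congr fun k => ?_
  simp only [mem_Icc]
  constructor <;> (rintro ⟨u1, u2⟩; constructor <;> linarith)

end Stmt10


/-- for `n` segments contained in lines of the first ruling of the
hyperboloid of one sheet, the image `A` in `AddCircle (2π)` of the set of `φ` such that
`M(φ)` meets every segment has at most `n` connected components. -/
theorem stmt_10 (n : ℕ) (hn : 1 ≤ n) (x y : Fin n → ℝ × ℝ × ℝ) (θ : Fin n → ℝ)
    (hσ : ∀ i, segment ℝ (x i) (y i) ⊆ Lrul (θ i))
    (A : Set (AddCircle (2 * Real.pi)))
    (hA : A = (fun φ : ℝ => (φ : AddCircle (2 * Real.pi))) ''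
      {φ : ℝ | ∀ i, (Mrul φ ∩ segment ℝ (x i) (y i)).Nonempty}) :
    A = ∅ ∨ ∃ φ : Fin n → AddCircle (2 * Real.pi), (∀ j, φ j ∈ A) ∧
      ∀ ξ ∈ A, ∃ j, ξ ∈ connectedComponentIn A (φ j) := by
  classical
  have hx : ∀ i, ∃ p, x i = Stmt10.Lpt (θ i) p := by
    intro i
    obtain ⟨t, ht⟩ := hσ i (left_mem_segment ℝ (x i) (y i))
    exact ⟨t, ht⟩
  have hy : ∀ i, ∃ q, y i = Stmt10.Lpt (θ i) q := by
    intro i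
    obtain ⟨t, ht⟩ := hσ i (right_mem_segment ℝ (x i) (y i))
    exact ⟨t, ht⟩
  choose p hp using hx
  choose q hq using hy
  set c : Fin n → ℝ := fun i => θ i + 2 * Real.arctan (min (p i) (q i)) with hc
  set d : Fin n → ℝ := fun i => θ i + 2 * Real.arctan (max (p i) (q i)) with hd
  have key : ∀ i (φ' : ℝ), (Mrul φ' ∩ segment ℝ (x i) (y i)).Nonempty ↔
      ∃ k : ℤ, c i + k * (2 * Real.pi) ≤ φ' ∧ φ' ≤ d i + k * (2 * Real.pi) := by
    intro i φ'
    rw [hp i, hq i, Stmt10.inter_seg]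
  rcases A.eq_empty_or_nonempty with hAe | ⟨ξ₀, hξ₀⟩
  · exact Or.inl hAe
  right
  have hnefin : Nonempty (Fin n) := ⟨⟨0, hn⟩⟩
  set Q : ℝ → AddCircle (2 * Real.pi) := fun r => (r : AddCircle (2 * Real.pi)) with hQ
  have hQcont : Continuous Q := continuous_quotient_mk'
  have hper : ∀ (r : ℝ) (k : ℤ), Q (r + k * (2 * Real.pi)) = Q r := by
    intro r k
    show ((r + k * (2 * Real.pi) : ℝ) : AddCircle (2 * Real.pi)) = (r : ℝ)
    rw [QuotientAddGroup.eq]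
    refine AddSubgroup.mem_zmultiples_iff.mpr ⟨-k, ?_⟩
    rw [zsmul_eq_mul]
    push_cast
    ring
  set Φ : Fin n → AddCircle (2 * Real.pi) := fun j => if Q (c j) ∈ A then Q (c j) else ξ₀
    with hΦ
  refine ⟨Φ, fun j => ?_, ?_⟩
  · by_cases h : Q (c j) ∈ A
    · simp only [hΦ, if_pos h]; exact h
    · simp only [hΦ, if_neg h]; exact hξ₀
  intro ξ hξ
  rw [hA] at hξ
  obtain ⟨ψ, hψ, rfl⟩ := hξ
  have hk : ∀ i, ∃ k : ℤ, c i + k * (2 * Real.pi) ≤ ψ ∧ ψ ≤ d i + k * (2 * Real.pi) :=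
    fun i => (key i ψ).mp (hψ i)
  choose k hk1 hk2 using hk
  obtain ⟨j, hj⟩ := Finite.exists_max (fun i => c i + (k i : ℝ) * (2 * Real.pi))
  set e := c j + (k j : ℝ) * (2 * Real.pi) with he
  have heψ : e ≤ ψ := hk1 j
  have hesub : ∀ ρ ∈ Icc e ψ, ∀ i, (Mrul ρ ∩ segment ℝ (x i) (y i)).Nonempty := by
    rintro ρ ⟨hρ1, hρ2⟩ i
    exact (key i ρ).mpr ⟨k i, le_trans (le_trans (hj i) hρ1) le_rfl,
      le_trans hρ2 (hk2 i)⟩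
  have hC : IsPreconnected (Q '' Icc e ψ) :=
    isPreconnected_Icc.image Q hQcont.continuousOn
  have hCA : Q '' Icc e ψ ⊆ A := by
    rintro _ ⟨ρ, hρ, rfl⟩
    rw [hA]
    exact ⟨ρ, hesub ρ hρ, rfl⟩
  have hQe : Q e ∈ Q '' Icc e ψ := ⟨e, ⟨le_refl e, heψ⟩, rfl⟩
  have hQec : Q e = Q (c j) := hper (c j) (k j)
  have hQcA : Q (c j) ∈ A := hQec ▸ hCA hQe
  have hΦj : Φ j = Q (c j) := by simp only [hΦ, if_pos hQcA]
  refine ⟨j, ?_⟩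
  have hsubcc : Q '' Icc e ψ ⊆ connectedComponentIn A (Φ j) :=
    hC.subset_connectedComponentIn (by rw [hΦj, ← hQec]; exact hQe) hCA
  exact hsubcc ⟨ψ, ⟨heψ, le_refl ψ⟩, rfl⟩
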